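/- arXiv:1109.1619 — 3 statements merged into one kernel-verified Lean document; each statement's English description precedes it below -/
import Mathlib

section
/- Let K and L be nonempty compact convex sets in ℝⁿ (n ≥ 2). Suppose that for every unit vector u ∈ ℝⁿ, the orthogonal projection L_u of L onto the hyperplane u^⊥ contains a translate of the corresponding projection K_u. Then the n-dimensional volumes satisfy V_n(K) ≤ (n/(n-1))ⁿ · V_n(L). -/
open Set MeasureTheory Pointwise

noncomputable def projSet {n : ℕ} (u : EuclideanSpace ℝ (Fin n))
    (K : Set (EuclideanSpace ℝ (Fin n))) : Set (EuclideanSpace ℝ (Fin n)) :=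
  (fun x => (Submodule.orthogonalProjection (ℝ ∙ u)ᗮ x : EuclideanSpace ℝ (Fin n))) '' K

namespace ShadowCover

open RealInnerProductSpace

variable {n : ℕ}

local notation "E" => EuclideanSpace ℝ (Fin n)

/-- support function -/
noncomputable def sfn (K : Set (EuclideanSpace ℝ (Fin n)))
    (v : EuclideanSpace ℝ (Fin n)) : ℝ :=
  sSup ((fun x => ⟪x, v⟫) '' K)

section Sfn

variable {K : Set (EuclideanSpace ℝ (Fin n))}

lemma sfn_bdd (hK : IsCompact K) (v : E) : BddAbove ((fun x => ⟪x, v⟫) '' K) :=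
  hK.bddAbove_image ((continuous_id.inner continuous_const).continuousOn)

lemma le_sfn (hK : IsCompact K) {x : E} (hx : x ∈ K) (v : E) : ⟪x, v⟫ ≤ sfn K v :=
  le_csSup (sfn_bdd hK v) ⟨x, hx, rfl⟩

lemma sfn_le (hne : K.Nonempty) {v : E} {c : ℝ} (h : ∀ x ∈ K, ⟪x, v⟫ ≤ c) :
    sfn K v ≤ c :=
  csSup_le (hne.image _) (by rintro y ⟨x, hx, rfl⟩; exact h x hx)

lemma sfn_zero (hne : K.Nonempty) : sfn K (0 : E) = 0 := by
  unfold sfn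
  have h : (fun x : E => ⟪x, (0:E)⟫) = fun _ : E => (0:ℝ) := by
    funext x; exact inner_zero_right x
  rw [h, hne.image_const, csSup_singleton]

lemma sfn_add (hne : K.Nonempty) (hK : IsCompact K) (v w : E) :
    sfn K (v + w) ≤ sfn K v + sfn K w :=
  sfn_le hne fun x hx => by
    rw [inner_add_right]
    exact add_le_add (le_sfn hK hx v) (le_sfn hK hx w)

lemma sfn_smul (hne : K.Nonempty) (hK : IsCompact K) {t : ℝ} (ht : 0 ≤ t) (v : E) :
    sfn K (t • v) = t * sfn K v := by
  rcases ht.eq_or_lt with h | h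
  · rw [← h, zero_smul, zero_mul, sfn_zero hne]
  · apply le_antisymm
    · refine sfn_le hne fun x hx => ?_
      rw [real_inner_smul_right]
      exact mul_le_mul_of_nonneg_left (le_sfn hK hx v) ht
    · have h2 : sfn K v ≤ t⁻¹ * sfn K (t • v) := by
        refine sfn_le hne fun x hx => ?_
        have h3 := le_sfn hK hx (t • v)
        rw [real_inner_smul_right] at h3
        calc ⟪x, v⟫ = t⁻¹ * (t * ⟪x, v⟫) := by field_simp
          _ ≤ t⁻¹ * sfn K (t • v) := by
              exact mul_le_mul_of_nonneg_left h3 (inv_nonneg.2 ht)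
      calc t * sfn K v ≤ t * (t⁻¹ * sfn K (t • v)) := by
            exact mul_le_mul_of_nonneg_left h2 ht
        _ = sfn K (t • v) := by
            rw [← mul_assoc, mul_inv_cancel₀ h.ne', one_mul]

lemma sfn_finsum {ι : Type*} (hne : K.Nonempty) (hK : IsCompact K) (s : Finset ι)
    (f : ι → E) : sfn K (∑ j ∈ s, f j) ≤ ∑ j ∈ s, sfn K (f j) := by
  induction s using Finset.cons_induction with
  | empty => simp [sfn_zero hne]
  | cons a s ha ih =>
    rw [Finset.sum_cons, Finset.sum_cons]
    exact (sfn_add hne hK _ _).trans (by linarith)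

lemma sfn_smul_set (hne : K.Nonempty) (hK : IsCompact K) {t : ℝ} (ht : 0 ≤ t) (v : E) :
    sfn (t • K) v = t * sfn K v := by
  have hne' : (t • K).Nonempty := hne.smul_set
  have hK' : IsCompact (t • K) := by
    have := hK.image (continuous_const_smul t)
    rwa [Set.image_smul] at this
  apply le_antisymm
  · refine sfn_le hne' fun y hy => ?_
    obtain ⟨x, hx, rfl⟩ := hy
    rw [real_inner_smul_left]
    exact mul_le_mul_of_nonneg_left (le_sfn hK hx v) ht
  · rcases ht.eq_or_lt with h | h
    · rw [← h, Set.zero_smul_set hne, zero_mul]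
      unfold sfn
      have himg : (fun x : E => ⟪x, v⟫) '' (0 : Set E) = {(0:ℝ)} := by
        rw [← Set.singleton_zero, Set.image_singleton, inner_zero_left]
      rw [himg, csSup_singleton]
    · have h2 : sfn K v ≤ t⁻¹ * sfn (t • K) v := by
        refine sfn_le hne fun x hx => ?_
        have h3 : ⟪t • x, v⟫ ≤ sfn (t • K) v :=
          le_sfn hK' (Set.smul_mem_smul_set hx) v
        rw [real_inner_smul_left] at h3
        calc ⟪x, v⟫ = t⁻¹ * (t * ⟪x, v⟫) := by field_simp
          _ ≤ t⁻¹ * sfn (t • K) v := mul_le_mul_of_nonneg_left h3 (inv_nonneg.2 ht)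
      calc t * sfn K v ≤ t * (t⁻¹ * sfn (t • K) v) := mul_le_mul_of_nonneg_left h2 ht
        _ = sfn (t • K) v := by
            rw [← mul_assoc, mul_inv_cancel₀ h.ne', one_mul]

lemma mem_of_sfn {C : Set (EuclideanSpace ℝ (Fin n))} (hne : C.Nonempty)
    (hcv : Convex ℝ C) (hcl : IsClosed C) {z : E}
    (h : ∀ v, ⟪z, v⟫ ≤ sfn C v) : z ∈ C := by
  by_contra hz
  obtain ⟨f, u, hfu, huz⟩ := geometric_hahn_banach_closed_point hcv hcl hz
  set v := (InnerProductSpace.toDual ℝ (EuclideanSpace ℝ (Fin n))).symm f with hv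
  have hfv : ∀ y : E, ⟪y, v⟫ = f y := fun y => by
    rw [real_inner_comm]
    exact InnerProductSpace.toDual_symm_apply
  have h1 : sfn C v ≤ u := sfn_le hne fun x hx => by rw [hfv]; exact (hfu x hx).le
  have h2 := h v
  rw [hfv] at h2
  linarith

end Sfn

lemma proj_inner (u : E) {v : E} (hv : v ∈ (ℝ ∙ u)ᗮ) (x : E) :
    ⟪((Submodule.orthogonalProjection (ℝ ∙ u)ᗮ x : E)), v⟫ = ⟪x, v⟫ := by
  have hm : x - (Submodule.orthogonalProjection (ℝ ∙ u)ᗮ x : E) ∈ ((ℝ ∙ u)ᗮ)ᗮ :=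
    Submodule.sub_starProjection_mem_orthogonal (K := (ℝ ∙ u)ᗮ) x
  have h0 : ⟪v, x - (Submodule.orthogonalProjection (ℝ ∙ u)ᗮ x : E)⟫ = 0 :=
    (Submodule.mem_orthogonal _ _).mp hm v hv
  rw [inner_sub_right] at h0
  have hA := real_inner_comm v ((Submodule.orthogonalProjection (ℝ ∙ u)ᗮ x : E))
  have hB := real_inner_comm v x
  linarith

lemma exists_unit_orth {W : Submodule ℝ (EuclideanSpace ℝ (Fin n))} (hW : W ≠ ⊤) :
    ∃ u : E, ‖u‖ = 1 ∧ ∀ x ∈ W, x ∈ (ℝ ∙ u)ᗮ := by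
  have hbot : Wᗮ ≠ ⊥ := fun h => hW (Submodule.orthogonal_eq_bot_iff.mp h)
  obtain ⟨u0, hu0W, hu0⟩ := Wᗮ.ne_bot_iff.mp hbot
  have hnorm : ‖u0‖ ≠ 0 := norm_ne_zero_iff.mpr hu0
  refine ⟨‖u0‖⁻¹ • u0, ?_, ?_⟩
  · rw [norm_smul, norm_inv, norm_norm, inv_mul_cancel₀ hnorm]
  · intro x hx
    rw [Submodule.mem_orthogonal]
    intro z hz
    obtain ⟨c, rfl⟩ := Submodule.mem_span_singleton.mp hz
    have h1 : ⟪u0, x⟫ = 0 := by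
      rw [real_inner_comm]
      exact (Submodule.mem_orthogonal _ _).mp hu0W x hx
    rw [real_inner_smul_left, real_inner_smul_left, h1]
    ring

lemma span_ne_top {ι : Type*} (s : Finset ι) (a : ι → E) (hcard : s.card < n) :
    Submodule.span ℝ (insert (-∑ j ∈ s, a j) (a '' ↑s)) ≠ ⊤ := by
  classical
  have h1 : (-∑ j ∈ s, a j) ∈ Submodule.span ℝ (a '' ↑s) := by
    apply Submodule.neg_mem
    exact Submodule.sum_mem _ fun j hj => Submodule.subset_span ⟨j, hj, rfl⟩
  rw [Submodule.span_insert_eq_span h1]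
  intro htop
  have h3 : Module.finrank ℝ (Submodule.span ℝ (a '' ↑s)) ≤ s.card := by
    have himg : a '' ↑s = ↑(s.image a) := by simp [Finset.coe_image]
    rw [himg]
    have h4 := finrank_span_finset_le_card (R := ℝ) (s.image a)
    unfold Set.finrank at h4
    exact le_trans h4 Finset.card_image_le
  rw [htop, finrank_top, finrank_euclideanSpace_fin] at h3
  omega


section Main

variable {K L : Set (EuclideanSpace ℝ (Fin n))}

/-- shadow covering gives support function control on each hyperplane. -/
lemma cover_sfn (hKne : K.Nonempty) (hKcpt : IsCompact K) (hLne : L.Nonempty)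
    (hLcpt : IsCompact L)
    (hcov : ∀ u : EuclideanSpace ℝ (Fin n), ‖u‖ = 1 →
      ∃ w ∈ (ℝ ∙ u)ᗮ, (fun y => y + w) '' projSet u K ⊆ projSet u L)
    {u : E} (hu : ‖u‖ = 1) :
    ∃ w ∈ (ℝ ∙ u)ᗮ, ∀ v ∈ (ℝ ∙ u)ᗮ, sfn K v + ⟪w, v⟫ ≤ sfn L v := by
  obtain ⟨w, hw, hsub⟩ := hcov u hu
  refine ⟨w, hw, fun v hv => ?_⟩
  have key : ∀ x ∈ K, ⟪x, v⟫ ≤ sfn L v - ⟪w, v⟫ := by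
    intro x hx
    have hmem : (Submodule.orthogonalProjection (ℝ ∙ u)ᗮ x : E) + w ∈ projSet u L :=
      hsub ⟨_, ⟨x, hx, rfl⟩, rfl⟩
    obtain ⟨y, hy, hEq⟩ := hmem
    have h1 : ⟪(Submodule.orthogonalProjection (ℝ ∙ u)ᗮ x : E) + w, v⟫ = ⟪x, v⟫ + ⟪w, v⟫ := by
      rw [inner_add_left, proj_inner u hv]
    have h2 : ⟪(Submodule.orthogonalProjection (ℝ ∙ u)ᗮ y : E), v⟫ ≤ sfn L v := by
      rw [proj_inner u hv]
      exact le_sfn hLcpt hy v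
    have hEq' : (Submodule.orthogonalProjection (ℝ ∙ u)ᗮ y : E) =
        (Submodule.orthogonalProjection (ℝ ∙ u)ᗮ x : E) + w := hEq
    rw [hEq', h1] at h2
    linarith
  have h3 : sfn K v ≤ sfn L v - ⟪w, v⟫ := sfn_le hKne key
  linarith

/-- support-function comparison for balanced configurations lying in a hyperplane. -/
lemma config_le (hKne : K.Nonempty) (hKcpt : IsCompact K) (hLne : L.Nonempty)
    (hLcpt : IsCompact L)
    (hcov : ∀ u : EuclideanSpace ℝ (Fin n), ‖u‖ = 1 →
      ∃ w ∈ (ℝ ∙ u)ᗮ, (fun y => y + w) '' projSet u K ⊆ projSet u L)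
    {ι : Type*} (s : Finset ι) (a : ι → E) (y : E)
    (hsum : y + ∑ j ∈ s, a j = 0)
    (u : E) (hu : ‖u‖ = 1) (hyu : y ∈ (ℝ ∙ u)ᗮ) (hau : ∀ j ∈ s, a j ∈ (ℝ ∙ u)ᗮ) :
    sfn K y + ∑ j ∈ s, sfn K (a j) ≤ sfn L y + ∑ j ∈ s, sfn L (a j) := by
  obtain ⟨w, hw, hmain⟩ := cover_sfn hKne hKcpt hLne hLcpt hcov hu
  have hy := hmain y hyu
  have ha : ∀ j ∈ s, sfn K (a j) ≤ sfn L (a j) - ⟪w, a j⟫ := fun j hj => by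
    have := hmain (a j) (hau j hj); linarith
  have hsum2 : ⟪w, y⟫ + ∑ j ∈ s, ⟪w, a j⟫ = 0 := by
    rw [← inner_sum, ← inner_add_right, hsum, inner_zero_right]
  calc sfn K y + ∑ j ∈ s, sfn K (a j)
      ≤ (sfn L y - ⟪w, y⟫) + ∑ j ∈ s, (sfn L (a j) - ⟪w, a j⟫) :=
        add_le_add (by linarith) (Finset.sum_le_sum ha)
    _ = sfn L y + ∑ j ∈ s, sfn L (a j) - (⟪w, y⟫ + ∑ j ∈ s, ⟪w, a j⟫) := by
        rw [Finset.sum_sub_distrib]; ring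
    _ = sfn L y + ∑ j ∈ s, sfn L (a j) := by rw [hsum2, sub_zero]

end Main

/-- the comparison function `r·h_L - h_K`. -/
noncomputable def gfun (K L : Set (EuclideanSpace ℝ (Fin n)))
    (v : EuclideanSpace ℝ (Fin n)) : ℝ :=
  ((n : ℝ) / ((n : ℝ) - 1)) * sfn L v - sfn K v

section GFun

variable {K L : Set (EuclideanSpace ℝ (Fin n))}

lemma gfun_zero (hKne : K.Nonempty) (hLne : L.Nonempty) : gfun K L (0 : E) = 0 := by
  unfold gfun
  rw [sfn_zero hKne, sfn_zero hLne]
  ring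

lemma gfun_smul (hKne : K.Nonempty) (hKcpt : IsCompact K) (hLne : L.Nonempty)
    (hLcpt : IsCompact L) {t : ℝ} (ht : 0 ≤ t) (v : E) :
    gfun K L (t • v) = t * gfun K L v := by
  unfold gfun
  rw [sfn_smul hKne hKcpt ht, sfn_smul hLne hLcpt ht]
  ring

/-- Key combinatorial lemma: the `n/(n-1)` bound for balanced configurations
of at most `n+1` vectors. -/
lemma Dsmall (hn : 2 ≤ n) (hKne : K.Nonempty) (hKcpt : IsCompact K) (hLne : L.Nonempty)
    (hLcpt : IsCompact L)
    (hcov : ∀ u : EuclideanSpace ℝ (Fin n), ‖u‖ = 1 →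
      ∃ w ∈ (ℝ ∙ u)ᗮ, (fun y => y + w) '' projSet u K ⊆ projSet u L)
    {ι : Type*} [DecidableEq ι] (s : Finset ι) (a : ι → E)
    (hcard : s.card ≤ n + 1) (hsum : ∑ j ∈ s, a j = 0) :
    0 ≤ ∑ j ∈ s, gfun K L (a j) := by
  have hn' : (2:ℝ) ≤ (n:ℝ) := by exact_mod_cast hn
  have hn1 : (0:ℝ) < (n:ℝ) - 1 := by linarith
  have hexp : ∑ j ∈ s, gfun K L (a j) =
      ((n : ℝ) / ((n : ℝ) - 1)) * (∑ j ∈ s, sfn L (a j)) - ∑ j ∈ s, sfn K (a j) := by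
    unfold gfun
    rw [Finset.sum_sub_distrib, Finset.mul_sum]
  have hTL : 0 ≤ ∑ j ∈ s, sfn L (a j) := by
    have h := sfn_finsum hLne hLcpt s a
    rw [hsum, sfn_zero hLne] at h
    linarith
  by_cases hc : s.card ≤ n
  · -- config lies in a hyperplane : direct comparison
    rcases s.eq_empty_or_nonempty with rfl | ⟨j₀, hj₀⟩
    · simp
    · have key : ∑ j ∈ s, sfn K (a j) ≤ ∑ j ∈ s, sfn L (a j) := by
        have hsum' : a j₀ + ∑ j ∈ s.erase j₀, a j = 0 := by
          rw [Finset.add_sum_erase s a hj₀, hsum]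
        have hrw : a j₀ = -∑ j ∈ s.erase j₀, a j := eq_neg_of_add_eq_zero_left hsum'
        have hlt : (s.erase j₀).card < n := by
          rw [Finset.card_erase_of_mem hj₀]; omega
        obtain ⟨u, hu, hmem⟩ := exists_unit_orth (span_ne_top (s.erase j₀) a hlt)
        have hyu : a j₀ ∈ (ℝ ∙ u)ᗮ := by
          rw [hrw]
          exact hmem _ (Submodule.subset_span (Set.mem_insert _ _))
        have hau : ∀ j ∈ s.erase j₀, a j ∈ (ℝ ∙ u)ᗮ := fun j hj =>
          hmem _ (Submodule.subset_span (Set.mem_insert_iff.mpr (Or.inr ⟨j, hj, rfl⟩)))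
        have hcfg := config_le hKne hKcpt hLne hLcpt hcov (s.erase j₀) a (a j₀)
          hsum' u hu hyu hau
        rw [← Finset.add_sum_erase s (fun j => sfn K (a j)) hj₀,
            ← Finset.add_sum_erase s (fun j => sfn L (a j)) hj₀]
        exact hcfg
      rw [hexp]
      rw [sub_nonneg, div_mul_eq_mul_div, le_div_iff₀ hn1]
      nlinarith
  · -- exactly n+1 elements : the pairing argument
    have hcard' : s.card = n + 1 := by omega
    -- each pair inequality
    have key : ∀ i ∈ s, ∀ k ∈ s.erase i,
        sfn K (a i + a k) + ((∑ j ∈ s, sfn K (a j)) - sfn K (a i) - sfn K (a k)) ≤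
        sfn L (a i + a k) + ((∑ j ∈ s, sfn L (a j)) - sfn L (a i) - sfn L (a k)) := by
      intro i hi k hk
      have hk' : k ∈ s := Finset.mem_of_mem_erase hk
      have hsum' : (a i + a k) + ∑ j ∈ (s.erase i).erase k, a j = 0 := by
        have h1 : a k + ∑ j ∈ (s.erase i).erase k, a j = ∑ j ∈ s.erase i, a j :=
          Finset.add_sum_erase _ a hk
        have h2 : a i + ∑ j ∈ s.erase i, a j = ∑ j ∈ s, a j :=
          Finset.add_sum_erase _ a hi
        rw [add_assoc, h1, h2, hsum]
      have hrw : a i + a k = -∑ j ∈ (s.erase i).erase k, a j :=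
        eq_neg_of_add_eq_zero_left hsum'
      have hlt : ((s.erase i).erase k).card < n := by
        rw [Finset.card_erase_of_mem hk, Finset.card_erase_of_mem hi, hcard']
        omega
      obtain ⟨u, hu, hmem⟩ := exists_unit_orth (span_ne_top ((s.erase i).erase k) a hlt)
      have hyu : a i + a k ∈ (ℝ ∙ u)ᗮ := by
        rw [hrw]
        exact hmem _ (Submodule.subset_span (Set.mem_insert _ _))
      have hau : ∀ j ∈ (s.erase i).erase k, a j ∈ (ℝ ∙ u)ᗮ := fun j hj =>
        hmem _ (Submodule.subset_span (Set.mem_insert_iff.mpr (Or.inr ⟨j, hj, rfl⟩)))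
      have hcfg := config_le hKne hKcpt hLne hLcpt hcov ((s.erase i).erase k) a
        (a i + a k) hsum' u hu hyu hau
      have eK : ∑ j ∈ (s.erase i).erase k, sfn K (a j) =
          (∑ j ∈ s, sfn K (a j)) - sfn K (a i) - sfn K (a k) := by
        rw [Finset.sum_erase_eq_sub (f := fun j => sfn K (a j)) hk,
            Finset.sum_erase_eq_sub (f := fun j => sfn K (a j)) hi]
      have eL : ∑ j ∈ (s.erase i).erase k, sfn L (a j) =
          (∑ j ∈ s, sfn L (a j)) - sfn L (a i) - sfn L (a k) := by
        rw [Finset.sum_erase_eq_sub (f := fun j => sfn L (a j)) hk,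
            Finset.sum_erase_eq_sub (f := fun j => sfn L (a j)) hi]
      rw [eK, eL] at hcfg
      exact hcfg
    -- sum it over all ordered pairs
    have sumkey := Finset.sum_le_sum fun i hi =>
      Finset.sum_le_sum fun k hk => key i hi k hk
    -- compute the "constant" parts
    have hBinner : ∀ (f : ι → ℝ), ∀ i ∈ s,
        ∑ k ∈ s.erase i, ((∑ j ∈ s, f j) - f i - f k)
        = ((n:ℝ) - 1) * ((∑ j ∈ s, f j) - f i) := by
      intro f i hi
      rw [Finset.sum_sub_distrib, Finset.sum_const, Finset.card_erase_of_mem hi, hcard',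
          Finset.sum_erase_eq_sub (f := f) hi, Nat.add_sub_cancel, nsmul_eq_mul]
      ring
    have hB : ∀ (f : ι → ℝ),
        ∑ i ∈ s, ∑ k ∈ s.erase i, ((∑ j ∈ s, f j) - f i - f k)
        = ((n:ℝ) - 1) * (n:ℝ) * (∑ j ∈ s, f j) := by
      intro f
      calc ∑ i ∈ s, ∑ k ∈ s.erase i, ((∑ j ∈ s, f j) - f i - f k)
          = ∑ i ∈ s, ((n:ℝ) - 1) * ((∑ j ∈ s, f j) - f i) :=
            Finset.sum_congr rfl (hBinner f)
        _ = ((n:ℝ) - 1) * (n:ℝ) * (∑ j ∈ s, f j) := by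
            rw [← Finset.mul_sum, Finset.sum_sub_distrib, Finset.sum_const, hcard',
                nsmul_eq_mul]
            push_cast
            ring
    have main : (∑ i ∈ s, ∑ k ∈ s.erase i, sfn K (a i + a k))
          + ((n:ℝ) - 1) * (n:ℝ) * (∑ j ∈ s, sfn K (a j))
        ≤ (∑ i ∈ s, ∑ k ∈ s.erase i, sfn L (a i + a k))
          + ((n:ℝ) - 1) * (n:ℝ) * (∑ j ∈ s, sfn L (a j)) := by
      have e1 : ∀ (M : Set (EuclideanSpace ℝ (Fin n))),
          ∑ i ∈ s, ∑ k ∈ s.erase i,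
            (sfn M (a i + a k) + ((∑ j ∈ s, sfn M (a j)) - sfn M (a i) - sfn M (a k)))
          = (∑ i ∈ s, ∑ k ∈ s.erase i, sfn M (a i + a k))
            + ((n:ℝ) - 1) * (n:ℝ) * (∑ j ∈ s, sfn M (a j)) := by
        intro M
        rw [← hB (fun j => sfn M (a j)), ← Finset.sum_add_distrib]
        refine Finset.sum_congr rfl fun i hi => ?_
        rw [← Finset.sum_add_distrib]
      rw [← e1 K, ← e1 L]
      exact sumkey
    -- lower bound for Q_K
    have hQKsum : ((n:ℝ) - 1) * (∑ j ∈ s, sfn K (a j))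
        ≤ ∑ i ∈ s, ∑ k ∈ s.erase i, sfn K (a i + a k) := by
      rw [Finset.mul_sum]
      refine Finset.sum_le_sum fun i hi => ?_
      have hvec : ∑ k ∈ s.erase i, (a i + a k) = ((n:ℝ) - 1) • a i := by
        rw [Finset.sum_add_distrib, Finset.sum_const, Finset.card_erase_of_mem hi, hcard',
            Finset.sum_erase_eq_sub (f := a) hi, hsum, Nat.add_sub_cancel,
            ← Nat.cast_smul_eq_nsmul ℝ, sub_smul, one_smul]
        abel
      calc ((n:ℝ) - 1) * sfn K (a i) = sfn K (((n:ℝ) - 1) • a i) :=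
            (sfn_smul hKne hKcpt (by linarith) _).symm
        _ = sfn K (∑ k ∈ s.erase i, (a i + a k)) := by rw [hvec]
        _ ≤ ∑ k ∈ s.erase i, sfn K (a i + a k) := sfn_finsum hKne hKcpt _ _
    -- upper bound for Q_L
    have hQL : ∑ i ∈ s, ∑ k ∈ s.erase i, sfn L (a i + a k)
        ≤ 2 * (n:ℝ) * (∑ j ∈ s, sfn L (a j)) := by
      have inner_bd : ∀ i ∈ s, ∑ k ∈ s.erase i, sfn L (a i + a k)
          ≤ (n:ℝ) * sfn L (a i) + ((∑ j ∈ s, sfn L (a j)) - sfn L (a i)) := by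
        intro i hi
        calc ∑ k ∈ s.erase i, sfn L (a i + a k)
            ≤ ∑ k ∈ s.erase i, (sfn L (a i) + sfn L (a k)) :=
              Finset.sum_le_sum fun k _ => sfn_add hLne hLcpt _ _
          _ = (n:ℝ) * sfn L (a i) + ((∑ j ∈ s, sfn L (a j)) - sfn L (a i)) := by
              rw [Finset.sum_add_distrib, Finset.sum_const, Finset.card_erase_of_mem hi,
                  hcard', Finset.sum_erase_eq_sub (f := fun j => sfn L (a j)) hi,
                  Nat.add_sub_cancel, nsmul_eq_mul]
      calc ∑ i ∈ s, ∑ k ∈ s.erase i, sfn L (a i + a k)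
          ≤ ∑ i ∈ s, ((n:ℝ) * sfn L (a i) + ((∑ j ∈ s, sfn L (a j)) - sfn L (a i))) :=
            Finset.sum_le_sum inner_bd
        _ = 2 * (n:ℝ) * (∑ j ∈ s, sfn L (a j)) := by
            rw [Finset.sum_add_distrib, ← Finset.mul_sum, Finset.sum_sub_distrib,
                Finset.sum_const, hcard', nsmul_eq_mul]
            push_cast
            ring
    -- conclude
    have h1 : ((n:ℝ) + 1) * (((n:ℝ) - 1) * (∑ j ∈ s, sfn K (a j)))
        ≤ ((n:ℝ) + 1) * ((n:ℝ) * (∑ j ∈ s, sfn L (a j))) := by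
      nlinarith [main, hQKsum, hQL]
    have h2 : ((n:ℝ) - 1) * (∑ j ∈ s, sfn K (a j)) ≤ (n:ℝ) * (∑ j ∈ s, sfn L (a j)) :=
      le_of_mul_le_mul_left h1 (by linarith)
    rw [hexp, sub_nonneg, div_mul_eq_mul_div, le_div_iff₀ hn1]
    linarith

end GFun


section Induction

variable {K L : Set (EuclideanSpace ℝ (Fin n))}

lemma split_step (hKne : K.Nonempty) (hKcpt : IsCompact K) (hLne : L.Nonempty)
    (hLcpt : IsCompact L)
    {ι : Type*} [DecidableEq ι] {m : ℕ}
    (ih : ∀ (s : Finset ι) (a : ι → E), s.card ≤ m → ∑ j ∈ s, a j = 0 →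
      0 ≤ ∑ j ∈ s, gfun K L (a j))
    (s : Finset ι) (a : ι → E) (hcard : s.card ≤ m + 1)
    (hsum : ∑ j ∈ s, a j = 0)
    (μ : ι → ℝ) (j₀ : ι) (hj₀ : j₀ ∈ s) (hμj₀ : μ j₀ = 0)
    (hμrel : ∑ j ∈ s, μ j • a j = 0)
    (i₁ : ι) (hi₁ : i₁ ∈ s) (hi₁pos : 0 < μ i₁) :
    0 ≤ ∑ j ∈ s, gfun K L (a j) := by
  classical
  obtain ⟨ip, hipP, hipmin⟩ := Finset.exists_min_image (s.filter fun j => 0 < μ j)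
      (fun j => (μ j)⁻¹) ⟨i₁, Finset.mem_filter.mpr ⟨hi₁, hi₁pos⟩⟩
  rw [Finset.mem_filter] at hipP
  obtain ⟨hips, hippos⟩ := hipP
  set tp := (μ ip)⁻¹ with htpdef
  have htp : 0 < tp := inv_pos.mpr hippos
  set lamp : ι → ℝ := fun j => 1 - tp * μ j with hlampdef
  have hlampos : ∀ j ∈ s, 0 ≤ lamp j := by
    intro j hj
    by_cases hμj : 0 < μ j
    · have hjP : j ∈ s.filter fun j => 0 < μ j := Finset.mem_filter.mpr ⟨hj, hμj⟩
      have h1 : tp ≤ (μ j)⁻¹ := hipmin j hjP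
      have h2 : tp * μ j ≤ (μ j)⁻¹ * μ j := mul_le_mul_of_nonneg_right h1 hμj.le
      rw [inv_mul_cancel₀ hμj.ne'] at h2
      simp only [hlampdef]
      linarith
    · push_neg at hμj
      have h2 : tp * μ j ≤ 0 := mul_nonpos_of_nonneg_of_nonpos htp.le hμj
      simp only [hlampdef]
      linarith
  have hlamip : lamp ip = 0 := by
    simp only [hlampdef, htpdef]
    rw [inv_mul_cancel₀ hippos.ne']
    ring
  have hlamrel : ∑ j ∈ s, lamp j • a j = 0 := by
    simp only [hlampdef, sub_smul, one_smul, mul_smul]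
    rw [Finset.sum_sub_distrib, hsum, ← Finset.smul_sum, hμrel, smul_zero, sub_zero]
  have hpart : ∀ (lam : ι → ℝ) (i' : ι), i' ∈ s → lam i' = 0 →
      (∑ j ∈ s, lam j • a j = 0) → 0 ≤ ∑ j ∈ s, gfun K L (lam j • a j) := by
    intro lam i' hi' hzero hrel
    have hterm : gfun K L (lam i' • a i') = 0 := by
      rw [hzero, zero_smul, gfun_zero hKne hLne]
    rw [← Finset.add_sum_erase s (fun j => gfun K L (lam j • a j)) hi', hterm, zero_add]
    apply ih (s.erase i') (fun j => lam j • a j)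
    · rw [Finset.card_erase_of_mem hi']
      omega
    · rw [Finset.sum_erase_eq_sub (f := fun j => lam j • a j) hi', hrel, hzero, zero_smul,
        sub_zero]
  by_cases hNeg : ∃ j ∈ s, μ j < 0
  · obtain ⟨k₁, hk₁s, hk₁neg⟩ := hNeg
    obtain ⟨im, himN, himmax⟩ := Finset.exists_max_image (s.filter fun j => μ j < 0)
        (fun j => (μ j)⁻¹) ⟨k₁, Finset.mem_filter.mpr ⟨hk₁s, hk₁neg⟩⟩
    rw [Finset.mem_filter] at himN
    obtain ⟨hims, himneg⟩ := himN
    set tm := (μ im)⁻¹ with htmdef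
    have htm : tm < 0 := inv_lt_zero.mpr himneg
    set lamm : ι → ℝ := fun j => 1 - tm * μ j with hlammdef
    have hlammpos : ∀ j ∈ s, 0 ≤ lamm j := by
      intro j hj
      by_cases hμj : μ j < 0
      · have hjN : j ∈ s.filter fun j => μ j < 0 := Finset.mem_filter.mpr ⟨hj, hμj⟩
        have h1 : (μ j)⁻¹ ≤ tm := himmax j hjN
        have h3 : (tm - (μ j)⁻¹) * μ j ≤ 0 :=
          mul_nonpos_of_nonneg_of_nonpos (sub_nonneg.mpr h1) hμj.le
        have h4 : (μ j)⁻¹ * μ j = 1 := inv_mul_cancel₀ hμj.ne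
        simp only [hlammdef]
        nlinarith
      · push_neg at hμj
        have h2 : tm * μ j ≤ 0 := mul_nonpos_of_nonpos_of_nonneg htm.le hμj
        simp only [hlammdef]
        linarith
    have hlamim : lamm im = 0 := by
      simp only [hlammdef, htmdef]
      rw [inv_mul_cancel₀ himneg.ne]
      ring
    have hlammrel : ∑ j ∈ s, lamm j • a j = 0 := by
      simp only [hlammdef, sub_smul, one_smul, mul_smul]
      rw [Finset.sum_sub_distrib, hsum, ← Finset.smul_sum, hμrel, smul_zero, sub_zero]
    have htptm : 0 < tp - tm := by linarith
    set al : ℝ := -tm / (tp - tm) with haldef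
    set be : ℝ := tp / (tp - tm) with hbedef
    have hal : 0 ≤ al := div_nonneg (by linarith) htptm.le
    have hbe : 0 ≤ be := div_nonneg htp.le htptm.le
    have hconv : ∀ j : ι, al * lamp j + be * lamm j = 1 := by
      intro j
      simp only [haldef, hbedef, hlampdef, hlammdef]
      field_simp
      ring
    have hdec : ∀ j ∈ s, gfun K L (a j)
        = al * gfun K L (lamp j • a j) + be * gfun K L (lamm j • a j) := by
      intro j hj
      rw [gfun_smul hKne hKcpt hLne hLcpt (hlampos j hj),
          gfun_smul hKne hKcpt hLne hLcpt (hlammpos j hj)]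
      linear_combination (-(gfun K L (a j))) * hconv j
    rw [Finset.sum_congr rfl hdec, Finset.sum_add_distrib, ← Finset.mul_sum, ← Finset.mul_sum]
    have h1 := hpart lamp ip hips hlamip hlamrel
    have h2 := hpart lamm im hims hlamim hlammrel
    exact add_nonneg (mul_nonneg hal h1) (mul_nonneg hbe h2)
  · push_neg at hNeg
    have hdec : ∀ j ∈ s, gfun K L (a j)
        = gfun K L (lamp j • a j) + gfun K L ((tp * μ j) • a j) := by
      intro j hj
      rw [gfun_smul hKne hKcpt hLne hLcpt (hlampos j hj),
          gfun_smul hKne hKcpt hLne hLcpt (mul_nonneg htp.le (hNeg j hj))]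
      simp only [hlampdef]
      ring
    rw [Finset.sum_congr rfl hdec, Finset.sum_add_distrib]
    have hrel2 : ∑ j ∈ s, (tp * μ j) • a j = 0 := by
      simp only [mul_smul]
      rw [← Finset.smul_sum, hμrel, smul_zero]
    have h1 := hpart lamp ip hips hlamip hlamrel
    have h2 := hpart (fun j => tp * μ j) j₀ hj₀ (by simp [hμj₀]) hrel2
    linarith

lemma Dfull (hn : 2 ≤ n) (hKne : K.Nonempty) (hKcpt : IsCompact K) (hLne : L.Nonempty)
    (hLcpt : IsCompact L)
    (hcov : ∀ u : EuclideanSpace ℝ (Fin n), ‖u‖ = 1 →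
      ∃ w ∈ (ℝ ∙ u)ᗮ, (fun y => y + w) '' projSet u K ⊆ projSet u L) :
    ∀ (m : ℕ) (ι : Type) [DecidableEq ι] (s : Finset ι) (a : ι → E),
      s.card ≤ m → ∑ j ∈ s, a j = 0 → 0 ≤ ∑ j ∈ s, gfun K L (a j) := by
  intro m
  induction m with
  | zero =>
    intro ι _ s a hc hsum
    have hs : s = ∅ := Finset.card_eq_zero.mp (Nat.le_zero.mp hc)
    subst hs
    simp
  | succ m ih =>
    intro ι _ s a hc hsum
    by_cases hsmall : s.card ≤ n + 1
    · exact Dsmall hn hKne hKcpt hLne hLcpt hcov s a hsmall hsum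
    by_cases hm : s.card ≤ m
    · exact ih ι s a hm hsum
    push_neg at hsmall hm
    obtain ⟨j₀, hj₀⟩ : s.Nonempty := Finset.card_pos.mp (by omega)
    have hs'card : n < (s.erase j₀).card := by
      rw [Finset.card_erase_of_mem hj₀]
      omega
    have hdep : ¬ LinearIndependent ℝ (fun j : ↥(s.erase j₀) => a ↑j) := by
      intro hli
      have hcle := hli.fintype_card_le_finrank
      rw [Fintype.card_coe, finrank_euclideanSpace_fin] at hcle
      omega
    obtain ⟨gc, hgc, j₁, hj₁⟩ := Fintype.not_linearIndependent_iff.mp hdep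
    classical
    set μ : ι → ℝ := fun j => if h : j ∈ s.erase j₀ then gc ⟨j, h⟩ else 0 with hμdef
    have hμj₀ : μ j₀ = 0 := by
      simp only [hμdef]
      rw [dif_neg (Finset.notMem_erase j₀ s)]
    have hμs' : ∀ j : ↥(s.erase j₀), μ ↑j = gc j := by
      intro j
      simp only [hμdef]
      rw [dif_pos j.2]
    have hμrel : ∑ j ∈ s, μ j • a j = 0 := by
      rw [← Finset.add_sum_erase s (fun j => μ j • a j) hj₀, hμj₀, zero_smul, zero_add]
      rw [← Finset.sum_attach (s.erase j₀) (fun j => μ j • a j)]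
      have hcongr : ∀ j ∈ (s.erase j₀).attach, μ ↑j • a ↑j = gc j • a ↑j := fun j _ => by
        rw [hμs' j]
      rw [Finset.sum_congr rfl hcongr, ← Finset.univ_eq_attach]
      exact hgc
    have hj₁s : (j₁ : ι) ∈ s := Finset.mem_of_mem_erase j₁.2
    by_cases hpos : ∃ i ∈ s, 0 < μ i
    · obtain ⟨i₁, hi₁, hi₁p⟩ := hpos
      exact split_step hKne hKcpt hLne hLcpt (fun s' a' h1 h2 => ih ι s' a' h1 h2)
        s a (by omega) hsum μ j₀ hj₀ hμj₀ hμrel i₁ hi₁ hi₁p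
    · push_neg at hpos
      have h1 : μ ↑j₁ ≠ 0 := by rw [hμs']; exact hj₁
      have h2 : μ ↑j₁ ≤ 0 := hpos _ hj₁s
      have hneg : 0 < (-μ) ↑j₁ := by
        have h3 : μ ↑j₁ < 0 := lt_of_le_of_ne h2 h1
        simpa using neg_pos.mpr h3
      have hμrel' : ∑ j ∈ s, (-μ) j • a j = 0 := by
        simp only [Pi.neg_apply, neg_smul]
        rw [Finset.sum_neg_distrib, hμrel, neg_zero]
      exact split_step hKne hKcpt hLne hLcpt (fun s' a' hh1 hh2 => ih ι s' a' hh1 hh2)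
        s a (by omega) hsum (-μ) j₀ hj₀ (by simp [hμj₀]) hμrel' j₁ hj₁s hneg

end Induction


section Ghat

variable (K L : Set (EuclideanSpace ℝ (Fin n)))

/-- decomposition set -/
def gset (x : EuclideanSpace ℝ (Fin n)) : Set ℝ :=
  {y : ℝ | ∃ (m : ℕ) (b : Fin m → EuclideanSpace ℝ (Fin n)),
    (∑ i, b i) = x ∧ (∑ i, gfun K L (b i)) = y}

/-- sublinear envelope of `gfun` -/
noncomputable def ghat (x : EuclideanSpace ℝ (Fin n)) : ℝ := sInf (gset K L x)

variable {K L}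

lemma gset_nonempty (x : E) : (gset K L x).Nonempty :=
  ⟨gfun K L x, 1, fun _ => x, by simp, by simp⟩

lemma gset_lb
    (hfull : ∀ (m : ℕ) (b : Fin m → E), (∑ i, b i) = 0 → 0 ≤ ∑ i, gfun K L (b i))
    (x : E) : ∀ y ∈ gset K L x, -(gfun K L (-x)) ≤ y := by
  rintro y ⟨m, b, hb, rfl⟩
  have hsum : (∑ i, Fin.snoc b (-x) i) = 0 := by
    rw [Fin.sum_univ_castSucc]
    simp only [Fin.snoc_castSucc, Fin.snoc_last, hb]
    abel
  have h := hfull (m + 1) (Fin.snoc b (-x)) hsum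
  have h' : 0 ≤ (∑ i : Fin m, gfun K L (b i)) + gfun K L (-x) := by
    simpa [Fin.sum_univ_castSucc] using h
  linarith

lemma ghat_bdd
    (hfull : ∀ (m : ℕ) (b : Fin m → E), (∑ i, b i) = 0 → 0 ≤ ∑ i, gfun K L (b i))
    (x : E) : BddBelow (gset K L x) :=
  ⟨-(gfun K L (-x)), fun y hy => gset_lb hfull x y hy⟩

lemma ghat_le_gfun
    (hfull : ∀ (m : ℕ) (b : Fin m → E), (∑ i, b i) = 0 → 0 ≤ ∑ i, gfun K L (b i))
    (x : E) : ghat K L x ≤ gfun K L x :=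
  csInf_le (ghat_bdd hfull x) ⟨1, fun _ => x, by simp, by simp⟩

lemma ghat_lb
    (hfull : ∀ (m : ℕ) (b : Fin m → E), (∑ i, b i) = 0 → 0 ≤ ∑ i, gfun K L (b i))
    (x : E) : -(gfun K L (-x)) ≤ ghat K L x :=
  le_csInf (gset_nonempty x) (gset_lb hfull x)

lemma ghat_zero
    (hfull : ∀ (m : ℕ) (b : Fin m → E), (∑ i, b i) = 0 → 0 ≤ ∑ i, gfun K L (b i))
    (hKne : K.Nonempty) (hLne : L.Nonempty) : ghat K L 0 = 0 := by
  have h1 := ghat_le_gfun hfull (0 : E)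
  have h2 := ghat_lb hfull (0 : E)
  rw [gfun_zero hKne hLne] at h1
  rw [neg_zero, gfun_zero hKne hLne, neg_zero] at h2
  linarith

lemma ghat_add
    (hfull : ∀ (m : ℕ) (b : Fin m → E), (∑ i, b i) = 0 → 0 ≤ ∑ i, gfun K L (b i))
    (x y : E) : ghat K L (x + y) ≤ ghat K L x + ghat K L y := by
  have H : ∀ p ∈ gset K L x, ∀ q ∈ gset K L y, ghat K L (x + y) ≤ p + q := by
    rintro p ⟨mp, bp, hbp, rfl⟩ q ⟨mq, bq, hbq, rfl⟩
    apply csInf_le (ghat_bdd hfull (x + y))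
    refine ⟨mp + mq, Fin.append bp bq, ?_, ?_⟩
    · rw [Fin.sum_univ_add]
      simp only [Fin.append_left, Fin.append_right, hbp, hbq]
    · rw [Fin.sum_univ_add]
      simp only [Fin.append_left, Fin.append_right]
  have h1 : ∀ q ∈ gset K L y, ghat K L (x + y) - q ≤ ghat K L x := fun q hq =>
    le_csInf (gset_nonempty x) fun p hp => by linarith [H p hp q hq]
  have h2 : ghat K L (x + y) - ghat K L x ≤ ghat K L y :=
    le_csInf (gset_nonempty y) fun q hq => by linarith [h1 q hq]
  linarith

lemma ghat_smul
    (hfull : ∀ (m : ℕ) (b : Fin m → E), (∑ i, b i) = 0 → 0 ≤ ∑ i, gfun K L (b i))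
    (hKne : K.Nonempty) (hKcpt : IsCompact K) (hLne : L.Nonempty)
    (hLcpt : IsCompact L) (c : ℝ) (hc : 0 < c) (x : E) :
    ghat K L (c • x) = c * ghat K L x := by
  have key : ∀ (t : ℝ), 0 < t → ∀ z : E, ghat K L (t • z) ≤ t * ghat K L z := by
    intro t ht z
    have H : ∀ p ∈ gset K L z, ghat K L (t • z) ≤ t * p := by
      rintro p ⟨m, b, hb, rfl⟩
      apply csInf_le (ghat_bdd hfull _)
      refine ⟨m, fun i => t • b i, ?_, ?_⟩
      · rw [← Finset.smul_sum, hb]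
      · rw [Finset.mul_sum]
        exact Finset.sum_congr rfl fun i _ => gfun_smul hKne hKcpt hLne hLcpt ht.le _
    have h2 : ghat K L (t • z) / t ≤ ghat K L z :=
      le_csInf (gset_nonempty z) fun p hp => by
        rw [div_le_iff₀ ht]
        have h3 := H p hp
        linarith
    rw [div_le_iff₀ ht] at h2
    linarith
  have h1 := key c hc x
  have h2 := key c⁻¹ (inv_pos.mpr hc) (c • x)
  rw [inv_smul_smul₀ hc.ne'] at h2
  apply le_antisymm h1
  calc c * ghat K L x ≤ c * (c⁻¹ * ghat K L (c • x)) := mul_le_mul_of_nonneg_left h2 hc.le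
    _ = ghat K L (c • x) := by rw [← mul_assoc, mul_inv_cancel₀ hc.ne', one_mul]

end Ghat

lemma exists_translate {K L : Set (EuclideanSpace ℝ (Fin n))} (hn : 2 ≤ n)
    (hKne : K.Nonempty) (hKcpt : IsCompact K) (hLne : L.Nonempty) (hLcpt : IsCompact L)
    (hcov : ∀ u : EuclideanSpace ℝ (Fin n), ‖u‖ = 1 →
      ∃ w ∈ (ℝ ∙ u)ᗮ, (fun y => y + w) '' projSet u K ⊆ projSet u L) :
    ∃ c : EuclideanSpace ℝ (Fin n), ∀ v, ⟪c, v⟫ ≤ gfun K L v := by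
  have hfull : ∀ (m : ℕ) (b : Fin m → E), (∑ i, b i) = 0 → 0 ≤ ∑ i, gfun K L (b i) := by
    intro m b hb
    exact Dfull hn hKne hKcpt hLne hLcpt hcov Finset.univ.card (Fin m) Finset.univ b
      le_rfl hb
  obtain ⟨φ, -, hφ⟩ := exists_extension_of_le_sublinear
    (⟨⊥, 0⟩ : (EuclideanSpace ℝ (Fin n)) →ₗ.[ℝ] ℝ) (ghat K L)
    (fun c hc x => ghat_smul hfull hKne hKcpt hLne hLcpt c hc x)
    (fun x y => ghat_add hfull x y)
    (fun x => by
      have hx : (x : E) = 0 := (Submodule.mem_bot ℝ).mp x.2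
      have hzero : ghat K L (x : E) = 0 := by rw [hx]; exact ghat_zero hfull hKne hLne
      rw [hzero]
      exact le_of_eq rfl)
  refine ⟨(InnerProductSpace.toDual ℝ (EuclideanSpace ℝ (Fin n))).symm
    (LinearMap.toContinuousLinearMap φ), fun v => ?_⟩
  have h1 : ⟪(InnerProductSpace.toDual ℝ (EuclideanSpace ℝ (Fin n))).symm
      (LinearMap.toContinuousLinearMap φ), v⟫ = (LinearMap.toContinuousLinearMap φ) v :=
    InnerProductSpace.toDual_symm_apply
  have h2 : (LinearMap.toContinuousLinearMap φ) v = φ v := by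
    rw [LinearMap.coe_toContinuousLinearMap']
  rw [h1, h2]
  exact (hφ v).trans (ghat_le_gfun hfull v)

end ShadowCover

/-- shadow covering implies `V(K) ≤ (n/(n-1))ⁿ V(L)`. -/
theorem shadow_covering_volume_bound {n : ℕ} (hn : 2 ≤ n)
    (K L : Set (EuclideanSpace ℝ (Fin n)))
    (hKne : K.Nonempty) (hKcpt : IsCompact K) (hKcv : Convex ℝ K)
    (hLne : L.Nonempty) (hLcpt : IsCompact L) (hLcv : Convex ℝ L)
    (hcov : ∀ u : EuclideanSpace ℝ (Fin n), ‖u‖ = 1 →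
      ∃ w ∈ (ℝ ∙ u)ᗮ, (fun y => y + w) '' projSet u K ⊆ projSet u L) :
    volume K ≤ ENNReal.ofReal (((n : ℝ) / ((n : ℝ) - 1)) ^ n) * volume L := by
  obtain ⟨c, hc⟩ := ShadowCover.exists_translate hn hKne hKcpt hLne hLcpt hcov
  have hn' : (2:ℝ) ≤ (n:ℝ) := by exact_mod_cast hn
  have hr0 : (0:ℝ) ≤ (n:ℝ) / ((n:ℝ) - 1) := by
    apply div_nonneg <;> linarith
  have hrL_ne : ((((n:ℝ) / ((n:ℝ) - 1))) • L).Nonempty := hLne.smul_set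
  have hrL_cpt : IsCompact ((((n:ℝ) / ((n:ℝ) - 1))) • L) := by
    have h := hLcpt.image (continuous_const_smul (((n:ℝ) / ((n:ℝ) - 1))))
    rwa [Set.image_smul] at h
  have hrL_cv : Convex ℝ ((((n:ℝ) / ((n:ℝ) - 1))) • L) := hLcv.smul _
  have hsub : K ⊆ (fun z => c + z) ⁻¹' ((((n:ℝ) / ((n:ℝ) - 1))) • L) := by
    intro x hx
    show c + x ∈ (((n:ℝ) / ((n:ℝ) - 1))) • L
    apply ShadowCover.mem_of_sfn hrL_ne hrL_cv hrL_cpt.isClosed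
    intro v
    have h2 := hc v
    unfold ShadowCover.gfun at h2
    have h3 := ShadowCover.le_sfn hKcpt hx v
    have h4 : ShadowCover.sfn ((((n:ℝ) / ((n:ℝ) - 1))) • L) v
        = (((n:ℝ) / ((n:ℝ) - 1))) * ShadowCover.sfn L v :=
      ShadowCover.sfn_smul_set hLne hLcpt hr0 v
    rw [inner_add_left, h4]
    linarith
  calc volume K ≤ volume ((fun z => c + z) ⁻¹' ((((n:ℝ) / ((n:ℝ) - 1))) • L)) :=
        measure_mono hsub
    _ = volume ((((n:ℝ) / ((n:ℝ) - 1))) • L) := measure_preimage_add volume c _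
    _ = ENNReal.ofReal ((((n:ℝ) / ((n:ℝ) - 1))) ^ n) * volume L := by
        rw [MeasureTheory.Measure.addHaar_smul_of_nonneg volume hr0 L,
          finrank_euclideanSpace_fin]
end

section
/- Let K and L be nonempty compact convex sets in ℝⁿ and let ψ : ℝⁿ → ℝⁿ be an invertible (nonsingular) linear transformation. Then the orthogonal projection L_u contains a translate of K_u for every unit vector u if and only if the orthogonal projection (ψL)_u contains a translate of (ψK)_u for every unit vector u. -/
open Set MeasureTheory Pointwise

lemma projSet_cover_iff {n : ℕ} (u : EuclideanSpace ℝ (Fin n))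
    (K L : Set (EuclideanSpace ℝ (Fin n))) :
    (∃ w ∈ (ℝ ∙ u)ᗮ, (fun y => y + w) '' projSet u K ⊆ projSet u L) ↔
    (∃ v : EuclideanSpace ℝ (Fin n), ∀ k ∈ K, ∃ l ∈ L, ∃ c : ℝ, k + v = l + c • u) := by
  set P := Submodule.orthogonalProjection (ℝ ∙ u)ᗮ with hP
  constructor
  · rintro ⟨w, hw, hsub⟩
    refine ⟨w, fun k hk => ?_⟩
    have hmem : (P k : EuclideanSpace ℝ (Fin n)) + w ∈ projSet u L :=
      hsub ⟨(P k : EuclideanSpace ℝ (Fin n)), ⟨k, hk, rfl⟩, rfl⟩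
    obtain ⟨l, hl, hEq⟩ := hmem
    have hEq' : (P l : EuclideanSpace ℝ (Fin n)) =
        (P k : EuclideanSpace ℝ (Fin n)) + w := hEq
    have hPw : (P w : EuclideanSpace ℝ (Fin n)) = w := by
      exact (Submodule.starProjection_eq_self_iff).mpr hw
    have hzero : (P (k + w - l) : EuclideanSpace ℝ (Fin n)) = 0 := by
      have : P (k + w - l) = P k + P w - P l := by
        rw [map_sub, map_add]
      rw [this]
      push_cast
      rw [hPw, hEq']
      abel
    have hker : P (k + w - l) = 0 := by
      exact Subtype.ext (by simpa using hzero)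
    have hmem2 : k + w - l ∈ ℝ ∙ u := by
      have h1 : (k + w - l) - (P (k + w - l) : EuclideanSpace ℝ (Fin n)) ∈ ((ℝ ∙ u)ᗮ)ᗮ :=
        Submodule.sub_starProjection_mem_orthogonal _
      rw [hker] at h1
      simp only [ZeroMemClass.coe_zero, sub_zero] at h1
      rwa [Submodule.orthogonal_orthogonal] at h1
    obtain ⟨c, hc⟩ := Submodule.mem_span_singleton.mp hmem2
    exact ⟨l, hl, c, by rw [hc]; abel⟩
  · rintro ⟨v, hv⟩
    refine ⟨(P v : EuclideanSpace ℝ (Fin n)), (P v).2, ?_⟩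
    rintro x ⟨_, ⟨k, hk, rfl⟩, rfl⟩
    obtain ⟨l, hl, c, hc⟩ := hv k hk
    refine ⟨l, hl, ?_⟩
    have hcu : P (c • u) = 0 := by
      apply Submodule.orthogonalProjectionOnto_apply_of_mem_orthogonal
      exact Submodule.le_orthogonal_orthogonal _
        (Submodule.smul_mem _ c (Submodule.mem_span_singleton_self u))
    have : P (k + v) = P l := by
      rw [hc, map_add, hcu, add_zero]
    have h2 : (P l : EuclideanSpace ℝ (Fin n)) =
        (P k : EuclideanSpace ℝ (Fin n)) + (P v : EuclideanSpace ℝ (Fin n)) := by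
      rw [← this, map_add]
      push_cast
      ring
    exact h2

lemma shadow_forward {n : ℕ}
    (K L : Set (EuclideanSpace ℝ (Fin n)))
    (ψ : EuclideanSpace ℝ (Fin n) ≃ₗ[ℝ] EuclideanSpace ℝ (Fin n))
    (h : ∀ u : EuclideanSpace ℝ (Fin n), ‖u‖ = 1 →
      ∃ w ∈ (ℝ ∙ u)ᗮ, (fun y => y + w) '' projSet u K ⊆ projSet u L) :
    ∀ u : EuclideanSpace ℝ (Fin n), ‖u‖ = 1 →
      ∃ w ∈ (ℝ ∙ u)ᗮ,
        (fun y => y + w) '' projSet u (ψ '' K) ⊆ projSet u (ψ '' L) := by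
  intro u hu
  rw [projSet_cover_iff]
  set d := ψ.symm u with hd
  have hdne : d ≠ 0 := by
    intro h0
    have : u = 0 := by
      have := congrArg ψ h0
      simpa [hd] using this
    rw [this] at hu; simp at hu
  have hdnorm : ‖d‖ ≠ 0 := norm_ne_zero_iff.mpr hdne
  set u₀ := ‖d‖⁻¹ • d with hu₀
  have hu₀norm : ‖u₀‖ = 1 := by
    rw [hu₀, norm_smul, norm_inv, norm_norm, inv_mul_cancel₀ hdnorm]
  obtain ⟨v, hv⟩ := (projSet_cover_iff u₀ K L).mp (h u₀ hu₀norm)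
  refine ⟨ψ v, ?_⟩
  rintro _ ⟨k, hk, rfl⟩
  obtain ⟨l, hl, c, hc⟩ := hv k hk
  refine ⟨ψ l, ⟨l, hl, rfl⟩, c * ‖d‖⁻¹, ?_⟩
  have := congrArg ψ hc
  rw [map_add, map_add, _root_.map_smul] at this
  rw [this]
  congr 1
  rw [hu₀, _root_.map_smul, hd, ψ.apply_symm_apply, smul_smul]

/-- the shadow covering condition is invariant under invertible linear
transformations of both bodies. -/
theorem shadow_covering_linear_invariance {n : ℕ}
    (K L : Set (EuclideanSpace ℝ (Fin n)))
    (hKne : K.Nonempty) (hKcpt : IsCompact K) (hKcv : Convex ℝ K)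
    (hLne : L.Nonempty) (hLcpt : IsCompact L) (hLcv : Convex ℝ L)
    (ψ : EuclideanSpace ℝ (Fin n) ≃ₗ[ℝ] EuclideanSpace ℝ (Fin n)) :
    (∀ u : EuclideanSpace ℝ (Fin n), ‖u‖ = 1 →
      ∃ w ∈ (ℝ ∙ u)ᗮ, (fun y => y + w) '' projSet u K ⊆ projSet u L) ↔
    (∀ u : EuclideanSpace ℝ (Fin n), ‖u‖ = 1 →
      ∃ w ∈ (ℝ ∙ u)ᗮ,
        (fun y => y + w) '' projSet u (ψ '' K) ⊆ projSet u (ψ '' L)) := by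
  constructor
  · exact shadow_forward K L ψ
  · intro h
    have := shadow_forward (ψ '' K) (ψ '' L) ψ.symm h
    have himg : ∀ S : Set (EuclideanSpace ℝ (Fin n)), ⇑ψ.symm '' (⇑ψ '' S) = S := by
      intro S
      rw [Set.image_image]
      simp [ψ.symm_apply_apply]
    rwa [himg, himg] at this
end

section
/- Let K be a nonempty compact convex set in ℝⁿ and let d ∈ {1, …, n−1}. Then for every (n−d)-dimensional linear subspace ξ ⊆ ℝⁿ, the orthogonal projection of the set (n−d)·(−K) onto ξ contains a translate of the orthogonal projection K_ξ of K onto ξ. -/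
open Set MeasureTheory Pointwise

/-- Orthogonal projection of a set onto a linear subspace `ξ` of `ℝⁿ`,
viewed as a subset of the ambient space. -/
noncomputable def projSub {n : ℕ} (ξ : Submodule ℝ (EuclideanSpace ℝ (Fin n)))
    (K : Set (EuclideanSpace ℝ (Fin n))) : Set (EuclideanSpace ℝ (Fin n)) :=
  (fun x => (ξ.orthogonalProjection x : EuclideanSpace ℝ (Fin n))) '' K

/-- Sum of the elements of a finite subset of a convex set lies in `card • C`. -/
lemma sum_mem_card_smul {E : Type*} [AddCommGroup E] [Module ℝ E] {C : Set E}
    (hC : Convex ℝ C) (hne : C.Nonempty) (J : Finset E) (hJ : (J : Set E) ⊆ C) :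
    (∑ j ∈ J, j) ∈ (J.card : ℝ) • C := by
  rcases J.eq_empty_or_nonempty with rfl | hJne
  · simp only [Finset.sum_empty, Finset.card_empty, Nat.cast_zero]
    rw [Set.zero_smul_set hne]
    exact rfl
  · have hk : (0:ℝ) < J.card := by exact_mod_cast Finset.card_pos.mpr hJne
    have hc : (∑ j ∈ J, ((J.card:ℝ))⁻¹ • j) ∈ C := by
      refine hC.sum_mem (fun _ _ => by positivity) ?_ (fun i hi => hJ hi)
      rw [Finset.sum_const, nsmul_eq_mul, mul_inv_cancel₀ hk.ne']
    refine ⟨_, hc, ?_⟩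
    show (J.card : ℝ) • (∑ j ∈ J, ((J.card:ℝ))⁻¹ • j) = ∑ j ∈ J, j
    rw [Finset.smul_sum]
    refine Finset.sum_congr rfl (fun j _ => ?_)
    rw [smul_smul, mul_inv_cancel₀ hk.ne', one_smul]

/-- every `(n-d)`-dimensional shadow of `(n-d)·(-K)` contains a
translate of the corresponding shadow of `K`. -/
theorem shadow_of_scaled_reflection_covers {n d : ℕ} (hd1 : 1 ≤ d) (hdn : d < n)
    (K : Set (EuclideanSpace ℝ (Fin n)))
    (hKne : K.Nonempty) (hKcpt : IsCompact K) (hKcv : Convex ℝ K) :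
    ∀ ξ : Submodule ℝ (EuclideanSpace ℝ (Fin n)), Module.finrank ℝ ξ = n - d →
      ∃ w ∈ ξ, (fun y => y + w) '' projSub ξ K ⊆
        projSub ξ (((n : ℝ) - (d : ℝ)) • (-K)) := by
  intro ξ hξ
  set m : ℕ := n - d with hm
  have hm1 : 1 ≤ m := by omega
  have hm0 : (0:ℝ) < (m:ℝ) := by exact_mod_cast hm1
  have hcast : (n : ℝ) - (d : ℝ) = (m : ℝ) := by
    rw [hm, Nat.cast_sub hdn.le]
  set f : EuclideanSpace ℝ (Fin n) →L[ℝ] EuclideanSpace ℝ (Fin n) :=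
    ξ.subtypeL.comp (ξ.orthogonalProjection) with hf
  set C : Set (EuclideanSpace ℝ (Fin n)) := projSub ξ K with hC
  have hCim : C = f '' K := rfl
  have hCsub : C ⊆ (ξ : Set (EuclideanSpace ℝ (Fin n))) := by
    rintro _ ⟨x, _, rfl⟩; exact (ξ.orthogonalProjection x).2
  have hCne : C.Nonempty := hCim ▸ hKne.image f
  have hCcpt : IsCompact C := hCim ▸ hKcpt.image f.continuous
  have hCcv : Convex ℝ C := hCim ▸ hKcv.linear_image f.toLinearMap
  have hval : Topology.IsClosedEmbedding ((↑) : ξ → EuclideanSpace ℝ (Fin n)) :=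
    Topology.IsClosedEmbedding.subtypeVal (Submodule.closed_of_finiteDimensional ξ)
  obtain ⟨c₀, hc₀⟩ := hCne
  set F : {y : EuclideanSpace ℝ (Fin n) // y ∈ C} → Set ξ :=
    fun y => Subtype.val ⁻¹' ((fun z => z + (y : EuclideanSpace ℝ (Fin n))) '' ((m : ℝ) • C))
    with hF
  have hFconv : ∀ y, Convex ℝ (F y) := by
    intro y
    have h1 : Convex ℝ ((fun z => z + (y : EuclideanSpace ℝ (Fin n))) '' ((m : ℝ) • C)) := by
      have := (hCcv.smul (m : ℝ)).translate (y : EuclideanSpace ℝ (Fin n))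
      simpa [add_comm] using this
    exact h1.linear_preimage ξ.subtype
  have hFcpt : ∀ y, IsCompact (F y) := by
    intro y
    refine hval.isCompact_preimage ?_
    refine IsCompact.image ?_ (continuous_add_right _)
    simpa [Set.image_smul] using hCcpt.image (continuous_const_smul (m : ℝ))
  have hmem_iff : ∀ (y : {y : EuclideanSpace ℝ (Fin n) // y ∈ C}) (t : ξ),
      t ∈ F y ↔ (t : EuclideanSpace ℝ (Fin n)) - (y : EuclideanSpace ℝ (Fin n)) ∈ (m : ℝ) • C := by
    intro y t
    constructor
    · rintro ⟨z, hz, hzt⟩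
      have hz' : z = (t : EuclideanSpace ℝ (Fin n)) - (y : EuclideanSpace ℝ (Fin n)) :=
        eq_sub_of_add_eq hzt
      rwa [← hz']
    · intro h
      exact ⟨_, h, by show _ - _ + _ = _; simp⟩
  have h_inter : ∀ I : Finset {y : EuclideanSpace ℝ (Fin n) // y ∈ C},
      I.card ≤ Module.finrank ℝ ξ + 1 → (⋂ i ∈ I, F i).Nonempty := by
    intro I hIcard
    classical
    rw [hξ] at hIcard
    set J : Finset (EuclideanSpace ℝ (Fin n)) := I.image Subtype.val with hJ
    have hJcard : J.card = I.card := Finset.card_image_of_injective I Subtype.val_injective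
    have hJC : (J : Set (EuclideanSpace ℝ (Fin n))) ⊆ C := by
      intro x hx
      simp only [hJ, Finset.coe_image] at hx
      obtain ⟨y, _, rfl⟩ := hx
      exact y.2
    rcases I.eq_empty_or_nonempty with rfl | hIne
    · exact ⟨0, by simp⟩
    have hJne : J.Nonempty := hIne.image _
    set k : ℕ := J.card - 1 with hk
    have hkm : k ≤ m := by omega
    set r : ℝ := (m : ℝ) - (k : ℝ) with hr
    have hkr : (0:ℝ) ≤ (k:ℝ) := by positivity
    have hr0 : 0 ≤ r := by
      rw [hr]
      have : (k:ℝ) ≤ (m:ℝ) := by exact_mod_cast hkm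
      linarith
    set p : EuclideanSpace ℝ (Fin n) := (∑ j ∈ J, j) + r • c₀ with hp
    have hpξ : p ∈ ξ :=
      ξ.add_mem (Submodule.sum_mem ξ fun j hj => hCsub (hJC hj)) (ξ.smul_mem r (hCsub hc₀))
    refine ⟨⟨p, hpξ⟩, ?_⟩
    rw [Set.mem_iInter₂]
    intro i hi
    rw [hmem_iff]
    have hiJ : (i : EuclideanSpace ℝ (Fin n)) ∈ J := Finset.mem_image_of_mem _ hi
    have hsplit : p - (i : EuclideanSpace ℝ (Fin n))
        = (∑ j ∈ J.erase (i : EuclideanSpace ℝ (Fin n)), j) + r • c₀ := by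
      rw [hp, ← Finset.sum_erase_add J _ hiJ]; abel
    have hsum : (∑ j ∈ J.erase (i : EuclideanSpace ℝ (Fin n)), j) ∈ (k : ℝ) • C := by
      have hcard : (J.erase (i : EuclideanSpace ℝ (Fin n))).card = k :=
        Finset.card_erase_of_mem hiJ
      have h2 := sum_mem_card_smul hCcv ⟨c₀, hc₀⟩ (J.erase (i : EuclideanSpace ℝ (Fin n)))
        (fun x hx => hJC (Finset.erase_subset _ _ hx))
      rwa [hcard] at h2
    obtain ⟨a, ha, hae⟩ := hsum
    have hae' : (k : ℝ) • a = ∑ j ∈ J.erase (i : EuclideanSpace ℝ (Fin n)), j := hae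
    refine ⟨((k : ℝ) / (m : ℝ)) • a + (r / (m : ℝ)) • c₀, ?_, ?_⟩
    · have h1 : (k : ℝ) / (m : ℝ) + r / (m : ℝ) = 1 := by
        field_simp [hr]
        rw [hr]; ring
      exact hCcv ha hc₀ (by positivity) (by positivity) h1
    · show (m:ℝ) • (((k : ℝ) / (m : ℝ)) • a + (r / (m : ℝ)) • c₀)
        = p - (i : EuclideanSpace ℝ (Fin n))
      have e1 : (m:ℝ) * ((k:ℝ) / (m:ℝ)) = (k:ℝ) := by field_simp
      have e2 : (m:ℝ) * (r / (m:ℝ)) = r := by field_simp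
      rw [smul_add, smul_smul, smul_smul, e1, e2, hae', hsplit]
  have hhelly : (⋂ y, F y).Nonempty := by
    refine Convex.helly_theorem_compact' (𝕜 := ℝ) hFconv hFcpt h_inter
  obtain ⟨t, ht⟩ := hhelly
  refine ⟨-(t : EuclideanSpace ℝ (Fin n)), ξ.neg_mem t.2, ?_⟩
  rintro _ ⟨y, hy, rfl⟩
  have hty : (t : EuclideanSpace ℝ (Fin n)) - y ∈ (m : ℝ) • C :=
    (hmem_iff ⟨y, hy⟩ t).mp (Set.mem_iInter.mp ht ⟨y, hy⟩)
  obtain ⟨c, hc, hce⟩ := hty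
  have hce' : (m : ℝ) • c = (t : EuclideanSpace ℝ (Fin n)) - y := hce
  obtain ⟨x, hx, hfx⟩ := hc
  refine ⟨((n : ℝ) - (d : ℝ)) • (-x), Set.smul_mem_smul_set (Set.neg_mem_neg.mpr hx), ?_⟩
  show (ξ.orthogonalProjection (((n : ℝ) - (d : ℝ)) • (-x)) : EuclideanSpace ℝ (Fin n))
      = y + -(t : EuclideanSpace ℝ (Fin n))
  have hproj : (ξ.orthogonalProjection (((n : ℝ) - (d : ℝ)) • (-x)) : EuclideanSpace ℝ (Fin n))
      = -(((n:ℝ) - (d:ℝ)) • (ξ.orthogonalProjection x : EuclideanSpace ℝ (Fin n))) := by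
    rw [_root_.map_smul, _root_.map_neg]
    push_cast
    rw [smul_neg]
  have hfx' : (ξ.orthogonalProjection x : EuclideanSpace ℝ (Fin n)) = c := hfx
  rw [hproj, hcast, hfx', hce', neg_sub, sub_eq_add_neg]
end
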